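/- For every η ∈ ℝ, the function Q ↦ J(Q,η) is convex on the convex set { Q ∈ Sym₀(3) : v_min(Q) > −1/3, |Q|² > η and v_min(Q) > η }. -/

import Mathlib

/-
Common setting for the formalisation of
"An analysis of equilibria in dense nematic liquid crystals" (J. M. Taylor).

* `V3` is ℝ³ (as a Euclidean space), `sph` is the unit sphere S²,
  and `μS` is the 2-dimensional Hausdorff (surface) measure restricted to S².
* `IsProb f` says `f ∈ P(S²)`.
* `FE f η` is the free energy `F(f,η) ∈ ℝ ∪ {+∞}` (realised as `EReal`),
  with the conventions `0 ln 0 = 0`, `0 ⬝ (+∞) = 0` and `-ln x = +∞` for `x ≤ 0`: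
  the value is the real integral whenever the argument of the logarithm is a.e.
  positive on `{f ≠ 0}` and the integrand is integrable, and `+∞` otherwise.
-/

open MeasureTheory Matrix Filter
open scoped ENNReal Topology Classical

noncomputable section

abbrev V3 : Type := EuclideanSpace ℝ (Fin 3)

/-- The unit sphere S² in ℝ³. -/
def sph : Set V3 := Metric.sphere (0 : V3) 1

/-- The 2-dimensional Hausdorff (surface) measure on S². -/
def μS : Measure V3 := (μH[2]).restrict sph

abbrev Mat3 : Type := Matrix (Fin 3) (Fin 3) ℝ

/-- Membership in Sym₀(3): real symmetric traceless 3×3 matrices. -/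
def Sym0 (Q : Mat3) : Prop := Q.IsSymm ∧ Q.trace = 0

/-- The Frobenius inner product `A·B = trace (A*B)` (on symmetric matrices). -/
def mdot (A B : Mat3) : ℝ := (A * B).trace

/-- The quadratic form `p ↦ Qp·p`. -/
def qf (Q : Mat3) (p : V3) : ℝ := ∑ i, ∑ j, Q i j * p i * p j

/-- The smallest eigenvalue of a symmetric matrix, via Rayleigh quotients on S². -/
def vmin (Q : Mat3) : ℝ := ⨅ p : sph, qf Q (p : V3)

/-- `f ∈ P(S²)`. -/
def IsProb (f : V3 → ℝ) : Prop :=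
  Integrable f μS ∧ (∀ᵐ p ∂μS, 0 ≤ f p) ∧ ∫ p, f p ∂μS = 1

/-- The interaction term `p ↦ ∫_{S²} ((p·q)² − 1/3) f(q) dq`. -/
def Kf (f : V3 → ℝ) (p : V3) : ℝ :=
  ∫ q, ((∑ i, p i * q i) ^ 2 - 1 / 3) * f q ∂μS

/-- The free energy `F(f,η) ∈ ℝ ∪ {+∞}`. -/
def FE (f : V3 → ℝ) (η : ℝ) : EReal :=
  if (∀ᵐ p ∂μS, f p ≠ 0 → η < Kf f p) ∧
      Integrable (fun p => f p * Real.log (f p) - f p * Real.log (Kf f p - η)) μS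
  then ((∫ p, f p * Real.log (f p) - f p * Real.log (Kf f p - η) ∂μS : ℝ) : EReal)
  else ⊤

/-- The Q-tensor `Q(f) = ∫_{S²} (p⊗p − (1/3)I) f(p) dp`. -/
def Qten (f : V3 → ℝ) : Mat3 :=
  Matrix.of fun i j => ∫ p, f p * (p i * p j - if i = j then (1 : ℝ) / 3 else 0) ∂μS

/-- The macroscopic energy `J(Q,η) = inf_{f ∈ A(Q)} F(f,η)` (`= +∞` when `A(Q) = ∅`). -/
def Jfun (Q : Mat3) (η : ℝ) : EReal :=
  sInf {y : EReal | ∃ f : V3 → ℝ, IsProb f ∧ Qten f = Q ∧ FE f η = y}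

/-- The dual objective `D(Q,λ,η) = λ·Q − ln ∫_{S²} exp(λp·p) max(Qp·p − η, 0) dp`. -/
def Dob (Q lam : Mat3) (η : ℝ) : ℝ :=
  mdot lam Q - Real.log (∫ p, Real.exp (qf lam p) * max (qf Q p - η) 0 ∂μS)

/-- The effective domain of `J(·,η)`. -/
def domJ (η : ℝ) : Set Mat3 :=
  {Q : Mat3 | Sym0 Q ∧ -(1/3) < vmin Q ∧ η < mdot Q Q}

/-- The matrix `∫_{S²} (f(p)/(Qp·p − η)) (p⊗p − (1/3)I) dp` (integrand `0` where `f` vanishes,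
by the junk-value conventions of division in Lean). -/
def Mmat (f : V3 → ℝ) (Q : Mat3) (η : ℝ) : Mat3 :=
  Matrix.of fun i j =>
    ∫ p, f p / (qf Q p - η) * (p i * p j - if i = j then (1 : ℝ) / 3 else 0) ∂μS

/-- The entropy `∫_{S²} f ln f ∈ ℝ ∪ {+∞}`. -/
def EntE (f : V3 → ℝ) : EReal :=
  if Integrable (fun p => f p * Real.log (f p)) μS
  then ((∫ p, f p * Real.log (f p) ∂μS : ℝ) : EReal)
  else ⊤

/-- The Ball–Majumdar singular potential `ψ_s(Q) = inf_{f ∈ A(Q)} ∫ f ln f`. -/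
def psiS (Q : Mat3) : EReal :=
  sInf {y : EReal | ∃ f : V3 → ℝ, IsProb f ∧ Qten f = Q ∧ EntE f = y}

/-- `f` is an `L^p`-local minimiser of `F(·,η)`. -/
def LpLocMin (pp : ℝ≥0∞) (η : ℝ) (f : V3 → ℝ) : Prop :=
  FE f η < ⊤ ∧ ∃ ε : ℝ, 0 < ε ∧ ∀ g : V3 → ℝ, IsProb g →
    eLpNorm (g - f) pp μS < ENNReal.ofReal ε → FE f η ≤ FE g η

lemma sph_norm {p : V3} (hp : p ∈ sph) : ∑ i, (p i)^2 = 1 := by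
  have h : ‖p‖ = 1 := by simpa [sph] using hp
  have h2 : √(∑ i, ‖p i‖ ^ 2) = 1 := (EuclideanSpace.norm_eq p) ▸ h
  have h3 : ∑ i, ‖p i‖ ^ 2 = 1 := Real.sqrt_eq_one.mp h2
  simpa [Real.norm_eq_abs, sq_abs] using h3

lemma coord_abs_le {p : V3} (hp : p ∈ sph) (i : Fin 3) : |p i| ≤ 1 := by
  have h := sph_norm hp
  have h1 : (p i)^2 ≤ ∑ j, (p j)^2 :=
    Finset.single_le_sum (f := fun j => (p j)^2) (fun j _ => sq_nonneg _) (Finset.mem_univ i)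
  rw [h] at h1
  exact abs_le_one_iff_mul_self_le_one.2 (by nlinarith)

lemma qf_abs_le (Q : Mat3) {p : V3} (hp : p ∈ sph) : |qf Q p| ≤ ∑ i, ∑ j, |Q i j| := by
  rw [qf]
  calc |∑ i, ∑ j, Q i j * p i * p j| ≤ ∑ i, |∑ j, Q i j * p i * p j| :=
        Finset.abs_sum_le_sum_abs _ _
    _ ≤ ∑ i, ∑ j, |Q i j * p i * p j| := by
        gcongr with i _
        exact Finset.abs_sum_le_sum_abs _ _
    _ ≤ ∑ i, ∑ j, |Q i j| := by
        apply Finset.sum_le_sum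
        intro i _
        apply Finset.sum_le_sum
        intro j _
        rw [abs_mul, abs_mul]
        calc |Q i j| * |p i| * |p j| ≤ |Q i j| * 1 * 1 :=
              mul_le_mul (mul_le_mul le_rfl (coord_abs_le hp i) (abs_nonneg _) (abs_nonneg _))
                (coord_abs_le hp j) (abs_nonneg _) (by positivity)
          _ = |Q i j| := by ring

lemma sph_pt : EuclideanSpace.single (0 : Fin 3) (1:ℝ) ∈ sph := by
  simp [sph, mem_sphere_zero_iff_norm, EuclideanSpace.norm_single]

instance : Nonempty sph := ⟨⟨_, sph_pt⟩⟩

lemma qf_bdd (Q : Mat3) : BddBelow (Set.range fun p : sph => qf Q (p : V3)) := by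
  refine ⟨-(∑ i, ∑ j, |Q i j|), ?_⟩
  rintro x ⟨p, rfl⟩
  have := qf_abs_le Q p.2
  have := neg_abs_le (qf Q (p:V3))
  linarith

lemma vmin_le_qf (Q : Mat3) {p : V3} (hp : p ∈ sph) : vmin Q ≤ qf Q p :=
  ciInf_le (qf_bdd Q) (⟨p, hp⟩ : sph)

lemma sph_single (k : Fin 3) : (EuclideanSpace.single k (1:ℝ)) ∈ sph := by
  simp [sph, mem_sphere_zero_iff_norm, EuclideanSpace.norm_single]

lemma qf_single (Q : Mat3) (k : Fin 3) : qf Q (EuclideanSpace.single k (1:ℝ)) = Q k k := by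
  rw [qf]
  have hs : ∀ i, (EuclideanSpace.single k (1:ℝ)) i = if i = k then 1 else 0 := by
    intro i
    simp [EuclideanSpace.single_apply]
  simp only [hs]
  rw [Fin.sum_univ_three]
  fin_cases k <;> simp [Fin.sum_univ_three]

lemma vmin_nonpos {Q : Mat3} (h : Sym0 Q) : vmin Q ≤ 0 := by
  by_contra hpos
  push_neg at hpos
  have hd : ∀ k, 0 < Q k k := fun k => lt_of_lt_of_le hpos
    (by rw [← qf_single Q k]; exact vmin_le_qf Q (sph_single k))
  have ht : Q.trace = ∑ k, Q k k := rfl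
  have := h.2
  rw [ht, Fin.sum_univ_three] at this
  have := hd 0; have := hd 1; have := hd 2
  linarith

lemma qf_combo (a b : ℝ) (Q₁ Q₂ : Mat3) (p : V3) :
    qf (a • Q₁ + b • Q₂) p = a * qf Q₁ p + b * qf Q₂ p := by
  simp only [qf, Matrix.add_apply, Matrix.smul_apply, smul_eq_mul, Finset.mul_sum]
  rw [← Finset.sum_add_distrib]
  congr 1; funext i
  rw [← Finset.sum_add_distrib]
  congr 1; funext j
  ring

lemma vmin_combo {a b : ℝ} (ha : 0 ≤ a) (hb : 0 ≤ b) (Q₁ Q₂ : Mat3) :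
    a * vmin Q₁ + b * vmin Q₂ ≤ vmin (a • Q₁ + b • Q₂) := by
  conv_rhs => rw [vmin]
  apply le_ciInf
  intro p
  rw [qf_combo]
  have h1 : vmin Q₁ ≤ qf Q₁ p := vmin_le_qf Q₁ p.2
  have h2 : vmin Q₂ ≤ qf Q₂ p := vmin_le_qf Q₂ p.2
  nlinarith

lemma mdot_self_nonneg {Q : Mat3} (h : Q.IsSymm) : 0 ≤ mdot Q Q := by
  rw [mdot, Matrix.trace]
  apply Finset.sum_nonneg
  intro i _
  rw [Matrix.diag_apply, Matrix.mul_apply]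
  apply Finset.sum_nonneg
  intro j _
  have : Q j i = Q i j := by rw [← h.apply]
  rw [this]
  exact mul_self_nonneg _

lemma sym0_combo {a b : ℝ} {Q₁ Q₂ : Mat3} (h1 : Sym0 Q₁) (h2 : Sym0 Q₂) :
    Sym0 (a • Q₁ + b • Q₂) := by
  constructor
  · rw [Matrix.IsSymm, Matrix.transpose_add, Matrix.transpose_smul, Matrix.transpose_smul,
      h1.1, h2.1]
  · rw [Matrix.trace_add, Matrix.trace_smul, Matrix.trace_smul, h1.2, h2.2]
    simp

lemma lip_cos : LipschitzWith 1 Real.cos := by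
  apply lipschitzWith_of_nnnorm_deriv_le Real.differentiable_cos
  intro x
  rw [Real.deriv_cos]
  rw [← NNReal.coe_le_coe, coe_nnnorm, Real.norm_eq_abs, abs_neg, NNReal.coe_one]
  exact Real.abs_sin_le_one x

lemma lip_sin : LipschitzWith 1 Real.sin := by
  apply lipschitzWith_of_nnnorm_deriv_le Real.differentiable_sin
  intro x
  rw [Real.deriv_sin]
  rw [← NNReal.coe_le_coe, coe_nnnorm, Real.norm_eq_abs, NNReal.coe_one]
  exact Real.abs_cos_le_one x

def Fmap : (Fin 2 → ℝ) → V3 := fun w => WithLp.toLp 2 fun i =>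
  if i = 0 then Real.cos (w 0) * Real.cos (w 1)
  else if i = 1 then Real.cos (w 0) * Real.sin (w 1)
  else Real.sin (w 0)

lemma Fmap0 (w : Fin 2 → ℝ) : Fmap w 0 = Real.cos (w 0) * Real.cos (w 1) := rfl
lemma Fmap1 (w : Fin 2 → ℝ) : Fmap w 1 = Real.cos (w 0) * Real.sin (w 1) := rfl
lemma Fmap2 (w : Fin 2 → ℝ) : Fmap w 2 = Real.sin (w 0) := rfl

lemma cos_dist (a b : ℝ) : |Real.cos a - Real.cos b| ≤ |a - b| := by
  have := lip_cos.dist_le_mul a b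
  simpa [Real.dist_eq] using this

lemma sin_dist (a b : ℝ) : |Real.sin a - Real.sin b| ≤ |a - b| := by
  have := lip_sin.dist_le_mul a b
  simpa [Real.dist_eq] using this

lemma prod_dist {a b a' b' : ℝ} (ha : |a| ≤ 1) (hb' : |b'| ≤ 1)
    (c d : ℝ) (h1 : |a - a'| ≤ c) (h2 : |b - b'| ≤ d) : |a * b - a' * b'| ≤ c + d := by
  have key : a * b - a' * b' = a * (b - b') + (a - a') * b' := by ring
  rw [key]
  have e1 : |a * (b - b')| ≤ 1 * d := by
    rw [abs_mul]; exact mul_le_mul ha h2 (abs_nonneg _) zero_le_one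
  have e2 : |(a - a') * b'| ≤ c * 1 := by
    rw [abs_mul]
    exact mul_le_mul h1 hb' (abs_nonneg _) ((abs_nonneg _).trans h1)
  calc |a * (b - b') + (a - a') * b'| ≤ |a * (b - b')| + |(a - a') * b'| := abs_add_le _ _
    _ ≤ 1 * d + c * 1 := add_le_add e1 e2
    _ = c + d := by ring

lemma lip_Fmap : LipschitzWith 4 Fmap := by
  apply LipschitzWith.of_dist_le_mul
  intro x y
  have hD : (0:ℝ) ≤ dist x y := dist_nonneg
  have h0 : |x 0 - y 0| ≤ dist x y := by
    simpa [Real.dist_eq] using dist_le_pi_dist x y 0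
  have h1 : |x 1 - y 1| ≤ dist x y := by
    simpa [Real.dist_eq] using dist_le_pi_dist x y 1
  have c0 : |Fmap x 0 - Fmap y 0| ≤ 2 * dist x y := by
    rw [Fmap0, Fmap0]
    have := prod_dist (Real.abs_cos_le_one (x 0)) (Real.abs_cos_le_one (y 1)) _ _
      ((cos_dist (x 0) (y 0)).trans h0) ((cos_dist (x 1) (y 1)).trans h1)
    linarith
  have c1 : |Fmap x 1 - Fmap y 1| ≤ 2 * dist x y := by
    rw [Fmap1, Fmap1]
    have := prod_dist (Real.abs_cos_le_one (x 0)) (Real.abs_sin_le_one (y 1)) _ _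
      ((cos_dist (x 0) (y 0)).trans h0) ((sin_dist (x 1) (y 1)).trans h1)
    linarith
  have c2 : |Fmap x 2 - Fmap y 2| ≤ 2 * dist x y := by
    rw [Fmap2, Fmap2]
    exact (sin_dist (x 0) (y 0)).trans (by linarith)
  have main : dist (Fmap x) (Fmap y) ≤ 4 * dist x y := by
    rw [EuclideanSpace.dist_eq]
    have hsum : ∑ i : Fin 3, dist (Fmap x i) (Fmap y i) ^ 2 ≤ 16 * dist x y ^ 2 := by
      rw [Fin.sum_univ_three]
      simp only [Real.dist_eq]
      nlinarith [abs_nonneg (Fmap x 0 - Fmap y 0), abs_nonneg (Fmap x 1 - Fmap y 1),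
        abs_nonneg (Fmap x 2 - Fmap y 2), sq_abs (Fmap x 0 - Fmap y 0),
        sq_abs (Fmap x 1 - Fmap y 1), sq_abs (Fmap x 2 - Fmap y 2), sq_nonneg (dist x y)]
    calc √(∑ i : Fin 3, dist (Fmap x i) (Fmap y i) ^ 2) ≤ √(16 * dist x y ^ 2) :=
          Real.sqrt_le_sqrt hsum
      _ = 4 * dist x y := by
          rw [show (16:ℝ) * dist x y ^2 = (4 * dist x y)^2 by ring]
          exact Real.sqrt_sq (by linarith)
  simpa using main


lemma sph_subset : sph ⊆ Fmap '' (Metric.closedBall (0 : Fin 2 → ℝ) 4) := by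
  intro p hp
  have hsum : (p 0)^2 + (p 1)^2 + (p 2)^2 = 1 := by
    have := sph_norm hp; rwa [Fin.sum_univ_three] at this
  set z := p 2 with hzdef
  have hz1 : z^2 ≤ 1 := by nlinarith [sq_nonneg (p 0), sq_nonneg (p 1)]
  have hz : -1 ≤ z ∧ z ≤ 1 := abs_le.1 (abs_le_one_iff_mul_self_le_one.2 (by nlinarith))
  set u := Real.arcsin z with hudef
  have hsin : Real.sin u = z := Real.sin_arcsin hz.1 hz.2
  have hcos : Real.cos u = √(1 - z^2) := Real.cos_arcsin z
  have hr : √(1 - z^2) = √((p 0)^2 + (p 1)^2) := by rw [show 1 - z^2 = (p 0)^2 + (p 1)^2 by nlinarith]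
  set r := √((p 0)^2 + (p 1)^2) with hrdef
  have hrsq : r^2 = (p 0)^2 + (p 1)^2 := Real.sq_sqrt (by positivity)
  have hrnn : 0 ≤ r := Real.sqrt_nonneg _
  -- choose v
  by_cases hr0 : r = 0
  · -- p 0 = p 1 = 0
    have h00 : (p 0)^2 + (p 1)^2 = 0 := by rw [← hrsq, hr0]; ring
    have hp0 : p 0 = 0 := by nlinarith [sq_nonneg (p 0), sq_nonneg (p 1)]
    have hp1 : p 1 = 0 := by nlinarith [sq_nonneg (p 0), sq_nonneg (p 1)]
    refine ⟨fun j => if j = 0 then u else 0, ?_, ?_⟩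
    · rw [Metric.mem_closedBall, dist_zero_right]
      rw [pi_norm_le_iff_of_nonneg (by norm_num)]
      intro i
      fin_cases i <;> simp [Real.norm_eq_abs]
      · exact (abs_le.2 ⟨Real.neg_pi_div_two_le_arcsin z, Real.arcsin_le_pi_div_two z⟩).trans
          (by linarith [Real.pi_le_four])
    · ext i
      fin_cases i <;>
        simp [Fmap, hsin, hcos, hr, ← hrdef, hr0, hp0, hp1]
      exact hzdef
  · have hrpos : 0 < r := lt_of_le_of_ne hrnn (Ne.symm hr0)
    set w : ℂ := ⟨p 0, p 1⟩ with hwdef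
    have habs : ‖w‖ = r := by
      rw [Complex.norm_def, Complex.normSq_mk]
      rw [hrdef]; ring_nf
    have hw0 : w ≠ 0 := by
      intro h
      rw [h] at habs
      simp at habs
      exact hr0 habs.symm
    set v := Complex.arg w with hvdef
    have hcv : Real.cos v = p 0 / r := by rw [hvdef, Complex.cos_arg hw0, habs]
    have hsv : Real.sin v = p 1 / r := by rw [hvdef, Complex.sin_arg w, habs]
    refine ⟨fun j => if j = 0 then u else v, ?_, ?_⟩
    · rw [Metric.mem_closedBall, dist_zero_right]
      rw [pi_norm_le_iff_of_nonneg (by norm_num)]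
      intro i
      fin_cases i <;> simp [Real.norm_eq_abs]
      · exact (abs_le.2 ⟨Real.neg_pi_div_two_le_arcsin z, Real.arcsin_le_pi_div_two z⟩).trans
          (by linarith [Real.pi_le_four])
      · exact (Complex.abs_arg_le_pi w).trans Real.pi_le_four
    · ext i
      fin_cases i <;>
        simp [Fmap, hsin, hcos, hr, ← hrdef, hcv, hsv]
      · field_simp
      · field_simp
      · exact hzdef

instance : IsFiniteMeasure μS := by
  constructor
  rw [μS, Measure.restrict_apply_univ]
  have h1 : μH[2] sph ≤ μH[2] (Fmap '' (Metric.closedBall (0 : Fin 2 → ℝ) 4)) :=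
    measure_mono sph_subset
  have h2 := lip_Fmap.hausdorffMeasure_image_le
    (show (0:ℝ) ≤ 2 by norm_num) (Metric.closedBall (0 : Fin 2 → ℝ) 4)
  have h3 : μH[(2:ℝ)] (Metric.closedBall (0 : Fin 2 → ℝ) 4) < ∞ := by
    have hcard : ((Fintype.card (Fin 2) : ℝ)) = (2:ℝ) := by norm_num
    have := hausdorffMeasure_pi_real (ι := Fin 2)
    rw [hcard] at this
    rw [this]
    exact (isCompact_closedBall _ _).measure_lt_top
  calc μH[(2:ℝ)] sph ≤ _ := h1
    _ ≤ _ := h2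
    _ < ∞ := by
        apply ENNReal.mul_lt_top _ h3
        simp [ENNReal.rpow_natCast]

lemma ae_sph : ∀ᵐ p ∂μS, p ∈ sph :=
  ae_restrict_mem Metric.isClosed_sphere.measurableSet

lemma coeff_cont (i j : Fin 3) :
    Continuous (fun p : V3 => p i * p j - if i = j then (1:ℝ)/3 else 0) :=
  (((EuclideanSpace.proj i).continuous.mul (EuclideanSpace.proj j).continuous).sub
    continuous_const)

lemma coeff_abs_le {p : V3} (hp : p ∈ sph) (i j : Fin 3) :
    |p i * p j - if i = j then (1:ℝ)/3 else 0| ≤ 4/3 := by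
  have h1 : |p i * p j| ≤ 1 := by
    rw [abs_mul]
    exact mul_le_one₀ (coord_abs_le hp i) (abs_nonneg _) (coord_abs_le hp j)
  have h2 : |if i = j then (1:ℝ)/3 else 0| ≤ 1/3 := by
    split
    · rw [abs_of_nonneg] <;> norm_num
    · simp
  calc |p i * p j - if i = j then (1:ℝ)/3 else 0|
      ≤ |p i * p j| + |if i = j then (1:ℝ)/3 else 0| := abs_sub _ _
    _ ≤ 1 + 1/3 := add_le_add h1 h2
    _ = 4/3 := by norm_num

lemma integrable_coeff {f : V3 → ℝ} (hf : Integrable f μS) (i j : Fin 3) :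
    Integrable (fun p => f p * (p i * p j - if i = j then (1:ℝ)/3 else 0)) μS := by
  apply Integrable.mono' (hf.norm.const_mul (4/3))
  · exact hf.aestronglyMeasurable.mul (coeff_cont i j).aestronglyMeasurable
  · filter_upwards [ae_sph] with p hp
    rw [Real.norm_eq_abs, abs_mul]
    calc |f p| * |p i * p j - if i = j then (1:ℝ)/3 else 0| ≤ |f p| * (4/3) :=
          mul_le_mul_of_nonneg_left (coeff_abs_le hp i j) (abs_nonneg _)
      _ = 4/3 * ‖f p‖ := by rw [Real.norm_eq_abs]; ring

lemma Qten_combo {a b : ℝ} {f₁ f₂ : V3 → ℝ} (hf₁ : Integrable f₁ μS) (hf₂ : Integrable f₂ μS) :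
    Qten (fun p => a * f₁ p + b * f₂ p) = a • Qten f₁ + b • Qten f₂ := by
  ext i j
  show (∫ p, (a * f₁ p + b * f₂ p) * (p i * p j - if i = j then (1:ℝ)/3 else 0) ∂μS) = _
  have : (fun p => (a * f₁ p + b * f₂ p) * (p i * p j - if i = j then (1:ℝ)/3 else 0))
      = fun p => a * (f₁ p * (p i * p j - if i = j then (1:ℝ)/3 else 0))
        + b * (f₂ p * (p i * p j - if i = j then (1:ℝ)/3 else 0)) := by
    funext p; ring
  rw [this, integral_add ((integrable_coeff hf₁ i j).const_mul a)
      ((integrable_coeff hf₂ i j).const_mul b), integral_const_mul, integral_const_mul]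
  simp [Qten, Matrix.add_apply, Matrix.smul_apply]

lemma Kf_eq_qf {f : V3 → ℝ} (hf : Integrable f μS) {p : V3} (hp : p ∈ sph) :
    Kf f p = qf (Qten f) p := by
  have hps := sph_norm hp
  rw [Fin.sum_univ_three] at hps
  have hint : ∀ i j : Fin 3,
      Integrable (fun q : V3 => f q * (q i * q j - if i = j then (1:ℝ)/3 else 0) * (p i * p j)) μS :=
    fun i j => (integrable_coeff hf i j).mul_const _
  have step1 : ∀ i j : Fin 3, (Qten f) i j * p i * p j
      = ∫ q, f q * (q i * q j - if i = j then (1:ℝ)/3 else 0) * (p i * p j) ∂μS := by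
    intro i j
    rw [show (Qten f) i j = ∫ q, f q * (q i * q j - if i = j then (1:ℝ)/3 else 0) ∂μS from rfl,
      mul_assoc, ← integral_mul_const]
  rw [qf]
  simp only [step1]
  have e1 : ∑ i : Fin 3, ∑ j : Fin 3,
        (∫ q, f q * (q i * q j - if i = j then (1:ℝ)/3 else 0) * (p i * p j) ∂μS)
      = ∫ q, ∑ i : Fin 3, ∑ j : Fin 3,
        f q * (q i * q j - if i = j then (1:ℝ)/3 else 0) * (p i * p j) ∂μS := by
    rw [integral_finset_sum _ (fun i _ => integrable_finset_sum _ (fun j _ => hint i j))]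
    exact Finset.sum_congr rfl fun i _ => (integral_finset_sum _ (fun j _ => hint i j)).symm
  rw [e1, Kf]
  congr 1
  funext q
  simp only [Fin.sum_univ_three, Fin.reduceEq, reduceIte, if_true, if_false]
  linear_combination (f q / 3) * hps

lemma mul_log_sub {x y : ℝ} (hx : 0 ≤ x) (hy : 0 < y) :
    x * Real.log x - x * Real.log y = x * Real.log (x / y) := by
  rcases eq_or_lt_of_le hx with h | h
  · simp [← h]
  · rw [Real.log_div h.ne' hy.ne']; ring

lemma mul_log_lb {x y : ℝ} (hx : 0 ≤ x) (hy : 0 < y) :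
    x - y ≤ x * Real.log x - x * Real.log y := by
  rcases eq_or_lt_of_le hx with h | h
  · simp [← h]; linarith
  · have hlog := Real.log_le_sub_one_of_pos (div_pos hy h)
    have : x * Real.log x - x * Real.log y = -(x * Real.log (y / x)) := by
      rw [Real.log_div hy.ne' h.ne']; ring
    rw [this]
    have h2 : x * Real.log (y/x) ≤ x * (y/x - 1) := mul_le_mul_of_nonneg_left hlog hx
    have h3 : x * (y/x - 1) = y - x := by field_simp
    linarith

lemma logsum {a b x₁ x₂ y₁ y₂ : ℝ} (ha : 0 < a) (hb : 0 < b)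
    (hx₁ : 0 ≤ x₁) (hx₂ : 0 ≤ x₂) (hy₁ : 0 < y₁) (hy₂ : 0 < y₂) :
    (a*x₁+b*x₂) * Real.log (a*x₁+b*x₂) - (a*x₁+b*x₂) * Real.log (a*y₁+b*y₂)
      ≤ a*(x₁*Real.log x₁ - x₁*Real.log y₁) + b*(x₂*Real.log x₂ - x₂*Real.log y₂) := by
  have hy : 0 < a*y₁+b*y₂ := by positivity
  have hx : 0 ≤ a*x₁+b*x₂ := by positivity
  rw [mul_log_sub hx hy, mul_log_sub hx₁ hy₁, mul_log_sub hx₂ hy₂] at *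
  have hw₁ : 0 ≤ a*y₁/(a*y₁+b*y₂) := by positivity
  have hw₂ : 0 ≤ b*y₂/(a*y₁+b*y₂) := by positivity
  have hwsum : a*y₁/(a*y₁+b*y₂) + b*y₂/(a*y₁+b*y₂) = 1 := by field_simp
  have key := Real.convexOn_mul_log.2 (Set.mem_Ici.2 (div_nonneg hx₁ hy₁.le))
    (Set.mem_Ici.2 (div_nonneg hx₂ hy₂.le)) hw₁ hw₂ hwsum
  simp only [smul_eq_mul] at key
  have e1 : a*y₁/(a*y₁+b*y₂) * (x₁/y₁) + b*y₂/(a*y₁+b*y₂) * (x₂/y₂)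
      = (a*x₁+b*x₂)/(a*y₁+b*y₂) := by field_simp
  rw [e1] at key
  have key2 := mul_le_mul_of_nonneg_left key hy.le
  have e2 : (a*y₁+b*y₂) * ((a*x₁+b*x₂)/(a*y₁+b*y₂) * Real.log ((a*x₁+b*x₂)/(a*y₁+b*y₂)))
      = (a*x₁+b*x₂) * Real.log ((a*x₁+b*x₂)/(a*y₁+b*y₂)) := by
    field_simp
  have e3 : (a*y₁+b*y₂) * (a*y₁/(a*y₁+b*y₂) * (x₁/y₁ * Real.log (x₁/y₁))
        + b*y₂/(a*y₁+b*y₂) * (x₂/y₂ * Real.log (x₂/y₂)))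
      = a*(x₁ * Real.log (x₁/y₁)) + b*(x₂ * Real.log (x₂/y₂)) := by
    field_simp
  rw [e2, e3] at key2
  exact key2

lemma qf_cont (Q : Mat3) : Continuous (qf Q) := by
  unfold qf
  apply continuous_finset_sum
  intro i _
  apply continuous_finset_sum
  intro j _
  exact (continuous_const.mul (EuclideanSpace.proj i).continuous).mul
    (EuclideanSpace.proj j).continuous

/-- Lower bound for the free energy. -/
lemma FE_lb (η : ℝ) (Q : Mat3) (hv : η < vmin Q) (f : V3 → ℝ) (hf : IsProb f)
    (hQ : Qten f = Q) :
    ((-((((∑ i, ∑ j, |Q i j|) + |η|)) * (μS Set.univ).toReal) : ℝ) : EReal) ≤ FE f η := by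
  set C : ℝ := (∑ i, ∑ j, |Q i j|) + |η| with hC
  rw [FE]
  split
  case isFalse => exact le_top
  case isTrue h =>
    rw [EReal.coe_le_coe_iff]
    have hptwise : ∀ᵐ p ∂μS, -C ≤ f p * Real.log (f p) - f p * Real.log (Kf f p - η) := by
      filter_upwards [ae_sph, hf.2.1] with p hp hfp
      have hKf : Kf f p = qf Q p := by rw [Kf_eq_qf hf.1 hp, hQ]
      have hy : 0 < Kf f p - η := by
        rw [hKf]; linarith [vmin_le_qf Q hp]
      have hyC : Kf f p - η ≤ C := by
        rw [hKf, hC]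
        have := qf_abs_le Q hp
        have := le_abs_self (qf Q p)
        have := neg_abs_le η
        linarith
      have := mul_log_lb hfp hy
      linarith
    calc -(C * (μS Set.univ).toReal) = ∫ _, -C ∂μS := by
          rw [integral_const, smul_eq_mul, measureReal_def]; ring
      _ ≤ _ := integral_mono_ae (integrable_const _) h.2 hptwise

/-- Main convexity inequality. -/
lemma main_ineq (η a b : ℝ) (Q₁ Q₂ : Mat3) (f₁ f₂ : V3 → ℝ)
    (ha : 0 < a) (hb : 0 < b) (hab : a + b = 1)
    (hv₁ : η < vmin Q₁) (hv₂ : η < vmin Q₂)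
    (hf₁ : IsProb f₁) (hf₂ : IsProb f₂) (hQ₁ : Qten f₁ = Q₁) (hQ₂ : Qten f₂ = Q₂)
    (hI₁ : Integrable (fun p => f₁ p * Real.log (f₁ p) - f₁ p * Real.log (Kf f₁ p - η)) μS)
    (hI₂ : Integrable (fun p => f₂ p * Real.log (f₂ p) - f₂ p * Real.log (Kf f₂ p - η)) μS) :
    IsProb (fun p => a * f₁ p + b * f₂ p) ∧
    Qten (fun p => a * f₁ p + b * f₂ p) = a • Q₁ + b • Q₂ ∧
    FE (fun p => a * f₁ p + b * f₂ p) η ≤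
      (((a * ∫ p, (f₁ p * Real.log (f₁ p) - f₁ p * Real.log (Kf f₁ p - η)) ∂μS
      + b * ∫ p, (f₂ p * Real.log (f₂ p) - f₂ p * Real.log (Kf f₂ p - η)) ∂μS : ℝ)) : EReal) := by
  set f : V3 → ℝ := fun p => a * f₁ p + b * f₂ p with hfdef
  have hfint : Integrable f μS := (hf₁.1.const_mul a).add (hf₂.1.const_mul b)
  have hprob : IsProb f := by
    refine ⟨hfint, ?_, ?_⟩
    · filter_upwards [hf₁.2.1, hf₂.2.1] with p h1 h2
      have : 0 ≤ a * f₁ p := mul_nonneg ha.le h1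
      have : 0 ≤ b * f₂ p := mul_nonneg hb.le h2
      simp only [hfdef]; linarith
    · rw [hfdef]
      rw [integral_add (hf₁.1.const_mul a) (hf₂.1.const_mul b), integral_const_mul,
        integral_const_mul, hf₁.2.2, hf₂.2.2]
      linarith
  have hQ : Qten f = a • Q₁ + b • Q₂ := by
    rw [hfdef, Qten_combo hf₁.1 hf₂.1, hQ₁, hQ₂]
  set Q : Mat3 := a • Q₁ + b • Q₂ with hQdef
  set C : ℝ := (∑ i, ∑ j, |Q i j|) + |η| with hCdef
  have hCnn : 0 ≤ C := by
    rw [hCdef]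
    have : 0 ≤ ∑ i, ∑ j, |Q i j| :=
      Finset.sum_nonneg fun i _ => Finset.sum_nonneg fun j _ => abs_nonneg _
    have := abs_nonneg η
    linarith
  -- pointwise facts on the sphere
  have hy₁pos : ∀ p ∈ sph, 0 < qf Q₁ p - η := fun p hp => by linarith [vmin_le_qf Q₁ hp]
  have hy₂pos : ∀ p ∈ sph, 0 < qf Q₂ p - η := fun p hp => by linarith [vmin_le_qf Q₂ hp]
  have hKf : ∀ p ∈ sph, Kf f p - η = a * (qf Q₁ p - η) + b * (qf Q₂ p - η) := by
    intro p hp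
    rw [Kf_eq_qf hfint hp, hQ, qf_combo]
    linear_combination η * hab
  have hKf₁ : ∀ p ∈ sph, Kf f₁ p = qf Q₁ p := fun p hp => by rw [Kf_eq_qf hf₁.1 hp, hQ₁]
  have hKf₂ : ∀ p ∈ sph, Kf f₂ p = qf Q₂ p := fun p hp => by rw [Kf_eq_qf hf₂.1 hp, hQ₂]
  -- condition
  have hcond : ∀ᵐ p ∂μS, f p ≠ 0 → η < Kf f p := by
    filter_upwards [ae_sph] with p hp _
    have h1 := hy₁pos p hp
    have h2 := hy₂pos p hp
    have := hKf p hp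
    nlinarith
  -- pointwise convexity inequality
  have hptwise : ∀ᵐ p ∂μS,
      f p * Real.log (f p) - f p * Real.log (Kf f p - η) ≤
      a * (f₁ p * Real.log (f₁ p) - f₁ p * Real.log (Kf f₁ p - η))
      + b * (f₂ p * Real.log (f₂ p) - f₂ p * Real.log (Kf f₂ p - η)) := by
    filter_upwards [ae_sph, hf₁.2.1, hf₂.2.1] with p hp h1 h2
    rw [hKf₁ p hp, hKf₂ p hp, hKf p hp]
    exact logsum ha hb h1 h2 (hy₁pos p hp) (hy₂pos p hp)
  -- pointwise lower bound
  have hlb : ∀ᵐ p ∂μS, -C ≤ f p * Real.log (f p) - f p * Real.log (Kf f p - η) := by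
    filter_upwards [ae_sph, hprob.2.1] with p hp hfp
    have hKfq : Kf f p = qf Q p := by rw [Kf_eq_qf hfint hp, hQ]
    have hy : 0 < Kf f p - η := by
      have h1 := hy₁pos p hp
      have h2 := hy₂pos p hp
      have := hKf p hp
      nlinarith
    have hyC : Kf f p - η ≤ C := by
      rw [hKfq, hCdef]
      have := qf_abs_le Q hp
      have := le_abs_self (qf Q p)
      have := neg_abs_le η
      linarith
    have := mul_log_lb hfp hy
    linarith
  -- measurability
  have hGm : AEStronglyMeasurable
      (fun p => f p * Real.log (f p) - f p * Real.log (Kf f p - η)) μS := by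
    have hfm : AEMeasurable f μS := hfint.aemeasurable
    have hqm : Measurable (fun p : V3 => Real.log (qf Q p - η)) :=
      Real.measurable_log.comp ((qf_cont Q).measurable.sub measurable_const)
    have hH : AEMeasurable (fun p => f p * Real.log (f p) - f p * Real.log (qf Q p - η)) μS :=
      (hfm.mul (Real.measurable_log.comp_aemeasurable hfm)).sub (hfm.mul hqm.aemeasurable)
    apply hH.aestronglyMeasurable.congr
    filter_upwards [ae_sph] with p hp
    rw [Kf_eq_qf hfint hp, hQ]
  -- integrability
  have hU : Integrable (fun p =>
      a * (f₁ p * Real.log (f₁ p) - f₁ p * Real.log (Kf f₁ p - η))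
      + b * (f₂ p * Real.log (f₂ p) - f₂ p * Real.log (Kf f₂ p - η))) μS :=
    (hI₁.const_mul a).add (hI₂.const_mul b)
  have hGint : Integrable (fun p => f p * Real.log (f p) - f p * Real.log (Kf f p - η)) μS := by
    apply Integrable.mono' (hU.norm.add (integrable_const C)) hGm
    filter_upwards [hptwise, hlb] with p h1 h2
    simp only [Pi.add_apply]
    rw [Real.norm_eq_abs, abs_le]
    constructor
    · have := norm_nonneg (a * (f₁ p * Real.log (f₁ p) - f₁ p * Real.log (Kf f₁ p - η))
        + b * (f₂ p * Real.log (f₂ p) - f₂ p * Real.log (Kf f₂ p - η)))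
      linarith
    · have := le_abs_self (a * (f₁ p * Real.log (f₁ p) - f₁ p * Real.log (Kf f₁ p - η))
        + b * (f₂ p * Real.log (f₂ p) - f₂ p * Real.log (Kf f₂ p - η)))
      rw [Real.norm_eq_abs]
      linarith
  refine ⟨hprob, hQ, ?_⟩
  rw [FE, if_pos ⟨hcond, hGint⟩, EReal.coe_le_coe_iff]
  calc ∫ p, (f p * Real.log (f p) - f p * Real.log (Kf f p - η)) ∂μS
      ≤ ∫ p, (a * (f₁ p * Real.log (f₁ p) - f₁ p * Real.log (Kf f₁ p - η))
        + b * (f₂ p * Real.log (f₂ p) - f₂ p * Real.log (Kf f₂ p - η))) ∂μS :=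
        integral_mono_ae hGint hU hptwise
    _ = _ := by
        rw [integral_add (hI₁.const_mul a) (hI₂.const_mul b), integral_const_mul,
          integral_const_mul]

lemma combo_lt {a b v₁ v₂ c : ℝ} (ha : 0 ≤ a) (hb : 0 ≤ b) (hab : a + b = 1)
    (h₁ : c < v₁) (h₂ : c < v₂) : c < a * v₁ + b * v₂ := by
  rcases eq_or_lt_of_le ha with h | h
  · have hb1 : b = 1 := by linarith
    rw [← h, hb1]; linarith
  · have e : a*c + b*c = c := by rw [← add_mul, hab, one_mul]
    linarith [mul_lt_mul_of_pos_left h₁ h, mul_le_mul_of_nonneg_left h₂.le hb]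

lemma Jfun_ne_bot {η : ℝ} {Q : Mat3} (hv : η < vmin Q) : Jfun Q η ≠ ⊥ := by
  have hle : ((-((((∑ i, ∑ j, |Q i j|) + |η|)) * (μS Set.univ).toReal) : ℝ) : EReal)
      ≤ Jfun Q η := by
    apply le_sInf
    rintro y ⟨f, hf, hQf, rfl⟩
    exact FE_lb η Q hv f hf hQf
  exact fun h => EReal.coe_ne_bot _ (le_bot_iff.1 (h ▸ hle))

lemma FE_real {f : V3 → ℝ} {η : ℝ} {s : ℝ} (h : FE f η = (s : EReal)) :
    ((∀ᵐ p ∂μS, f p ≠ 0 → η < Kf f p) ∧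
      Integrable (fun p => f p * Real.log (f p) - f p * Real.log (Kf f p - η)) μS) ∧
    s = ∫ p, f p * Real.log (f p) - f p * Real.log (Kf f p - η) ∂μS := by
  by_cases hc : (∀ᵐ p ∂μS, f p ≠ 0 → η < Kf f p) ∧
      Integrable (fun p => f p * Real.log (f p) - f p * Real.log (Kf f p - η)) μS
  · refine ⟨hc, ?_⟩
    rw [FE, if_pos hc] at h
    exact_mod_cast h.symm
  · rw [FE, if_neg hc] at h
    exact absurd h.symm (EReal.coe_ne_top s)



/-- `J(·,η)` is convex on the convex set
`{Q ∈ Sym₀(3) : v_min(Q) > −1/3, |Q|² > η, v_min(Q) > η}`. -/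
theorem stmt_8 (η : ℝ) :
    Convex ℝ {Q : Mat3 | Sym0 Q ∧ -(1/3) < vmin Q ∧ η < mdot Q Q ∧ η < vmin Q} ∧
    ∀ Q₁ Q₂ : Mat3,
      (Sym0 Q₁ ∧ -(1/3) < vmin Q₁ ∧ η < mdot Q₁ Q₁ ∧ η < vmin Q₁) →
      (Sym0 Q₂ ∧ -(1/3) < vmin Q₂ ∧ η < mdot Q₂ Q₂ ∧ η < vmin Q₂) →
      ∀ a b : ℝ, 0 ≤ a → 0 ≤ b → a + b = 1 →
        Jfun (a • Q₁ + b • Q₂) η ≤ (a : EReal) * Jfun Q₁ η + (b : EReal) * Jfun Q₂ η := by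
  constructor
  · -- convexity of the domain
    rintro Q₁ ⟨hs₁, hm₁, _, hv₁⟩ Q₂ ⟨hs₂, hm₂, _, hv₂⟩ a b ha hb hab
    have hcombo := vmin_combo ha hb Q₁ Q₂
    have hsym := sym0_combo (a := a) (b := b) hs₁ hs₂
    have hη : η < 0 := lt_of_lt_of_le hv₁ (vmin_nonpos hs₁)
    refine ⟨hsym, ?_, ?_, ?_⟩
    · exact lt_of_lt_of_le (combo_lt ha hb hab hm₁ hm₂) hcombo
    · exact lt_of_lt_of_le hη (mdot_self_nonneg hsym.1)
    · exact lt_of_lt_of_le (combo_lt ha hb hab hv₁ hv₂) hcombo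
  · rintro Q₁ Q₂ ⟨hs₁, hm₁, hd₁, hv₁⟩ ⟨hs₂, hm₂, hd₂, hv₂⟩ a b ha hb hab
    by_cases hA : a = 0
    · have hB : b = 1 := by linarith
      subst hA; subst hB
      simp only [zero_smul, one_smul, zero_add, EReal.coe_zero, EReal.coe_one,
        zero_mul, one_mul]
      exact le_rfl
    · by_cases hB : b = 0
      · have hA1 : a = 1 := by linarith
        subst hB; subst hA1
        simp only [zero_smul, one_smul, add_zero, EReal.coe_zero, EReal.coe_one,
          zero_mul, one_mul]
        exact le_rfl
      · have ha' : 0 < a := lt_of_le_of_ne ha (Ne.symm hA)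
        have hb' : 0 < b := lt_of_le_of_ne hb (Ne.symm hB)
        have hJb₁ : Jfun Q₁ η ≠ ⊥ := Jfun_ne_bot hv₁
        have hJb₂ : Jfun Q₂ η ≠ ⊥ := Jfun_ne_bot hv₂
        by_cases hT₁ : Jfun Q₁ η = ⊤
        · rw [hT₁, EReal.mul_top_of_pos (by exact_mod_cast ha' : (0:EReal) < (a:EReal))]
          have hne : ((b : ℝ) : EReal) * Jfun Q₂ η ≠ ⊥ := by
            by_cases hT₂ : Jfun Q₂ η = ⊤
            · rw [hT₂, EReal.mul_top_of_pos (by exact_mod_cast hb' : (0:EReal) < (b:EReal))]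
              exact top_ne_bot
            · lift Jfun Q₂ η to ℝ using ⟨hT₂, hJb₂⟩ with r₂
              rw [← EReal.coe_mul]
              exact EReal.coe_ne_bot _
          rw [EReal.top_add_of_ne_bot hne]
          exact le_top
        · by_cases hT₂ : Jfun Q₂ η = ⊤
          · rw [hT₂, EReal.mul_top_of_pos (by exact_mod_cast hb' : (0:EReal) < (b:EReal))]
            have hne : ((a : ℝ) : EReal) * Jfun Q₁ η ≠ ⊥ := by
              lift Jfun Q₁ η to ℝ using ⟨hT₁, hJb₁⟩ with r₁
              rw [← EReal.coe_mul]
              exact EReal.coe_ne_bot _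
            rw [EReal.add_top_of_ne_bot hne]
            exact le_top
          · -- both real
            obtain ⟨r₁, hr₁⟩ : ∃ r : ℝ, Jfun Q₁ η = ↑r := by
              lift Jfun Q₁ η to ℝ using ⟨hT₁, hJb₁⟩ with r; exact ⟨r, rfl⟩
            obtain ⟨r₂, hr₂⟩ : ∃ r : ℝ, Jfun Q₂ η = ↑r := by
              lift Jfun Q₂ η to ℝ using ⟨hT₂, hJb₂⟩ with r; exact ⟨r, rfl⟩
            rw [hr₁, hr₂, ← EReal.coe_mul, ← EReal.coe_mul, ← EReal.coe_add]
            by_contra hcon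
            push_neg at hcon
            obtain ⟨t, h₁t, h₂t⟩ := EReal.exists_between_coe_real hcon
            have hεpos : 0 < t - (a * r₁ + b * r₂) := by
              rw [EReal.coe_lt_coe_iff] at h₁t; linarith
            set ε := t - (a * r₁ + b * r₂) with hε
            -- pick near-optimal elements
            have hlt₁ : Jfun Q₁ η < ((r₁ + ε : ℝ) : EReal) := by
              rw [hr₁, EReal.coe_lt_coe_iff]; linarith
            have hlt₂ : Jfun Q₂ η < ((r₂ + ε : ℝ) : EReal) := by
              rw [hr₂, EReal.coe_lt_coe_iff]; linarith
            rw [Jfun] at hlt₁ hlt₂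
            rw [sInf_lt_iff] at hlt₁ hlt₂
            obtain ⟨y₁, ⟨f₁, hP₁, hQf₁, hy₁⟩, hy₁lt⟩ := hlt₁
            obtain ⟨y₂, ⟨f₂, hP₂, hQf₂, hy₂⟩, hy₂lt⟩ := hlt₂
            -- y₁, y₂ are real
            have hy₁nb : y₁ ≠ ⊥ := by
              rw [← hy₁]; rw [FE]; split
              · exact EReal.coe_ne_bot _
              · exact top_ne_bot
            have hy₂nb : y₂ ≠ ⊥ := by
              rw [← hy₂]; rw [FE]; split
              · exact EReal.coe_ne_bot _
              · exact top_ne_bot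
            obtain ⟨s₁, rfl⟩ : ∃ s : ℝ, y₁ = ↑s := by
              lift y₁ to ℝ using ⟨ne_top_of_lt hy₁lt, hy₁nb⟩ with s; exact ⟨s, rfl⟩
            obtain ⟨s₂, rfl⟩ : ∃ s : ℝ, y₂ = ↑s := by
              lift y₂ to ℝ using ⟨ne_top_of_lt hy₂lt, hy₂nb⟩ with s; exact ⟨s, rfl⟩
            rw [EReal.coe_lt_coe_iff] at hy₁lt hy₂lt
            obtain ⟨⟨hc₁, hint₁⟩, hs₁eq⟩ := FE_real hy₁
            obtain ⟨⟨hc₂, hint₂⟩, hs₂eq⟩ := FE_real hy₂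
            obtain ⟨hprob, hQc, hFEle⟩ := main_ineq η a b Q₁ Q₂ f₁ f₂ ha' hb' hab
              hv₁ hv₂ hP₁ hP₂ hQf₁ hQf₂ hint₁ hint₂
            have hmem : FE (fun p => a * f₁ p + b * f₂ p) η ∈
                {y : EReal | ∃ f : V3 → ℝ, IsProb f ∧ Qten f = a • Q₁ + b • Q₂ ∧ FE f η = y} :=
              ⟨_, hprob, hQc, rfl⟩
            have hchain : Jfun (a • Q₁ + b • Q₂) η ≤ ((a * s₁ + b * s₂ : ℝ) : EReal) := by
              refine le_trans (sInf_le hmem) ?_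
              rw [hs₁eq, hs₂eq] at *
              exact hFEle
            have : ((a * s₁ + b * s₂ : ℝ) : EReal) < ((t : ℝ) : EReal) := by
              rw [EReal.coe_lt_coe_iff]
              nlinarith
            exact absurd (lt_of_le_of_lt (hchain.trans this.le) h₂t) (lt_irrefl _)
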